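/- Let n, m, p be positive natural numbers. Let A be an n×n real matrix, B an n×m real matrix, Bw an n×p real matrix, Ŷ an m×n real matrix, S an n×n real symmetric matrix, and Ŵ an n×n real symmetric matrix. Let β₁, β₂, λ̂, s be real numbers with 0 < β₁ ≤ β₂, λ̂ > 0, s > 0, and suppose β₁·I_n ≤ Ŵ ≤ β₂·I_n and Bw·Bwᵀ ≤ s²·I_n in the Loewner order. Suppose moreover that −S + (AŴ + BŶ) + (AŴ + BŶ)ᵀ + 2λ̂·Ŵ is negative semidefinite. Define a = s/√(β₂·β₁), α̂ = (s/λ̂)·√(β₂/β₁), W = a·Ŵ, and Y = a·Ŷ. Then: (i) the block matrix [[(AW + BY) + (AW + BY)ᵀ − a·S + λ̂·W, Bw], [Bwᵀ, −α̂·I_p]] is negative semidefinite, and (ii) the block matrix [[λ̂·W, 0, W], [0, 0·I_p, 0], [W, 0, α̂·I_n]] is positive semidefinite. -/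

import Mathlib

open Matrix

/-- The 3×3 block matrix on the index type `Fin n ⊕ (Fin p ⊕ Fin q)`. -/
def blk3 {n p q : ℕ}
    (A11 : Matrix (Fin n) (Fin n) ℝ) (A12 : Matrix (Fin n) (Fin p) ℝ)
    (A13 : Matrix (Fin n) (Fin q) ℝ)
    (A21 : Matrix (Fin p) (Fin n) ℝ) (A22 : Matrix (Fin p) (Fin p) ℝ)
    (A23 : Matrix (Fin p) (Fin q) ℝ)
    (A31 : Matrix (Fin q) (Fin n) ℝ) (A32 : Matrix (Fin q) (Fin p) ℝ)
    (A33 : Matrix (Fin q) (Fin q) ℝ) :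
    Matrix (Fin n ⊕ (Fin p ⊕ Fin q)) (Fin n ⊕ (Fin p ⊕ Fin q)) ℝ :=
  Matrix.fromBlocks A11 (Matrix.of fun i j => Sum.elim (A12 i) (A13 i) j)
    (Matrix.of fun i j => Sum.elim (fun ip => A21 ip j) (fun iq => A31 iq j) i)
    (Matrix.fromBlocks A22 A23 A32 A33)

section Aux

variable {k l : Type*} [Fintype k] [Fintype l] [DecidableEq k] [DecidableEq l]

lemma psd_smul_aux {c : ℝ} {M : Matrix k k ℝ} (hc : 0 ≤ c) (hM : M.PosSemidef) :
    (c • M).PosSemidef := by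
  refine ⟨?_, fun x => ?_⟩
  · unfold Matrix.IsHermitian
    rw [conjTranspose_smul, star_trivial, hM.1.eq]
  · exact (hM.smul hc).2 x

lemma psd_blockdiag_aux {A : Matrix k k ℝ} {D : Matrix l l ℝ}
    (hA : A.PosSemidef) (hD : D.PosSemidef) :
    (Matrix.fromBlocks A 0 0 D).PosSemidef := by
  rw [posSemidef_iff_dotProduct_mulVec]
  refine ⟨IsHermitian.fromBlocks hA.1 (by simp) hD.1, fun x => ?_⟩
  have h1 := hA.dotProduct_mulVec_nonneg (x ∘ Sum.inl)
  have h2 := hD.dotProduct_mulVec_nonneg (x ∘ Sum.inr)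
  simp only [dotProduct, Fintype.sum_sum_type, fromBlocks_mulVec, zero_mulVec, add_zero,
    zero_add, star_trivial, Function.comp_apply] at h1 h2 ⊢
  exact add_nonneg h1 h2

end Aux

theorem stmt11 (n m p : ℕ) (hn : 0 < n) (hm : 0 < m) (hp : 0 < p)
    (A : Matrix (Fin n) (Fin n) ℝ) (B : Matrix (Fin n) (Fin m) ℝ)
    (Bw : Matrix (Fin n) (Fin p) ℝ) (Yhat : Matrix (Fin m) (Fin n) ℝ)
    (S : Matrix (Fin n) (Fin n) ℝ) (hS : S.IsSymm)
    (What : Matrix (Fin n) (Fin n) ℝ) (hWhat : What.IsSymm)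
    (β₁ β₂ lamhat s : ℝ) (hβ₁ : 0 < β₁) (hβ₁₂ : β₁ ≤ β₂)
    (hlam : 0 < lamhat) (hs : 0 < s)
    (hlow : (What - β₁ • (1 : Matrix (Fin n) (Fin n) ℝ)).PosSemidef)
    (hupp : (β₂ • (1 : Matrix (Fin n) (Fin n) ℝ) - What).PosSemidef)
    (hBw : (s ^ 2 • (1 : Matrix (Fin n) (Fin n) ℝ) - Bw * Bwᵀ).PosSemidef)
    (hccm : (-(-S + ((A * What + B * Yhat) + (A * What + B * Yhat)ᵀ) +
        (2 * lamhat) • What)).PosSemidef)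
    (a alphat : ℝ) (W : Matrix (Fin n) (Fin n) ℝ) (Y : Matrix (Fin m) (Fin n) ℝ)
    (ha : a = s / Real.sqrt (β₂ * β₁))
    (halphat : alphat = (s / lamhat) * Real.sqrt (β₂ / β₁))
    (hWdef : W = a • What) (hYdef : Y = a • Yhat) :
    (-(Matrix.fromBlocks
        ((A * W + B * Y) + (A * W + B * Y)ᵀ - a • S + lamhat • W) Bw
        Bwᵀ (-(alphat • (1 : Matrix (Fin p) (Fin p) ℝ))))).PosSemidef ∧
    (blk3 (lamhat • W) 0 W
          0 ((0 : ℝ) • (1 : Matrix (Fin p) (Fin p) ℝ)) 0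
          W 0 (alphat • (1 : Matrix (Fin n) (Fin n) ℝ))).PosSemidef := by
  subst hWdef hYdef
  have hβ₂ : 0 < β₂ := lt_of_lt_of_le hβ₁ hβ₁₂
  have s1pos : 0 < Real.sqrt β₁ := Real.sqrt_pos.mpr hβ₁
  have s2pos : 0 < Real.sqrt β₂ := Real.sqrt_pos.mpr hβ₂
  have h1 : Real.sqrt β₁ ^ 2 = β₁ := Real.sq_sqrt hβ₁.le
  have h2 : Real.sqrt β₂ ^ 2 = β₂ := Real.sq_sqrt hβ₂.le
  have ha' : a = s / (Real.sqrt β₂ * Real.sqrt β₁) := by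
    rw [ha, Real.sqrt_mul hβ₂.le]
  have halphat' : alphat = (s / lamhat) * (Real.sqrt β₂ / Real.sqrt β₁) := by
    rw [halphat, Real.sqrt_div hβ₂.le]
  have hapos : 0 < a := by
    rw [ha']; positivity
  have halpos : 0 < alphat := by
    rw [halphat']; positivity
  have k1 : alphat⁻¹ * s ^ 2 = a * lamhat * β₁ := by
    rw [ha', halphat']
    field_simp
    linear_combination h1
  have k2 : a * β₂ = lamhat * alphat := by
    rw [ha', halphat']
    field_simp
    linear_combination (-1 : ℝ) * h2
  have hG : (S - ((A * What + B * Yhat) + (A * What + B * Yhat)ᵀ) -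
      (2 * lamhat) • What).PosSemidef := by
    have h := hccm
    convert h using 1
    module
  have hWpsd : (a • What).PosSemidef := by
    have h : a • What = a • ((What - β₁ • (1 : Matrix (Fin n) (Fin n) ℝ)) +
        β₁ • (1 : Matrix (Fin n) (Fin n) ℝ)) := by module
    rw [h]
    exact psd_smul_aux hapos.le (hlow.add (psd_smul_aux hβ₁.le Matrix.PosSemidef.one))
  -- part (i)
  constructor
  · set D : Matrix (Fin n) (Fin n) ℝ :=
      a • (S - ((A * What + B * Yhat) + (A * What + B * Yhat)ᵀ) - (2 * lamhat) • What) +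
      (a * lamhat) • (What - β₁ • (1 : Matrix (Fin n) (Fin n) ℝ)) +
      alphat⁻¹ • (s ^ 2 • (1 : Matrix (Fin n) (Fin n) ℝ) - Bw * Bwᵀ) with hDdef
    have hD : D.PosSemidef :=
      ((psd_smul_aux hapos.le hG).add
        (psd_smul_aux (by positivity) hlow)).add
        (psd_smul_aux (by positivity) hBw)
    set K : Matrix (Fin n ⊕ Fin p) (Fin n ⊕ Fin p) ℝ :=
      Matrix.fromBlocks 0 0 (-Bwᵀ) (alphat • (1 : Matrix (Fin p) (Fin p) ℝ)) with hKdef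
    have hKT : Kᴴ = Matrix.fromBlocks 0 (-Bw) 0 (alphat • (1 : Matrix (Fin p) (Fin p) ℝ)) := by
      rw [hKdef, Matrix.fromBlocks_conjTranspose]
      congr 1 <;> simp [Matrix.conjTranspose_eq_transpose_of_trivial]
    have keyId : -(Matrix.fromBlocks
        ((A * (a • What) + B * (a • Yhat)) + (A * (a • What) + B * (a • Yhat))ᵀ
          - a • S + lamhat • (a • What)) Bw
        Bwᵀ (-(alphat • (1 : Matrix (Fin p) (Fin p) ℝ))))
        = alphat⁻¹ • (Kᴴ * K) + Matrix.fromBlocks D 0 0 0 := by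
      rw [hKT, hKdef, Matrix.fromBlocks_multiply, Matrix.fromBlocks_neg,
        Matrix.fromBlocks_smul, Matrix.fromBlocks_add]
      refine Matrix.fromBlocks_inj.mpr ⟨?_, ?_, ?_, ?_⟩
      · rw [hDdef]
        simp only [Matrix.mul_smul, Matrix.smul_mul, Matrix.neg_mul, Matrix.mul_neg,
          Matrix.mul_one, Matrix.one_mul, Matrix.zero_mul, Matrix.mul_zero,
          transpose_add, transpose_smul, neg_neg, zero_add, add_zero]
        match_scalars <;>
          first
            | ring1
            | linear_combination k1
            | linear_combination (-1 : ℝ) * k1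
            | linear_combination (2 : ℝ) * k1
            | linear_combination (-2 : ℝ) * k1
      · simp only [Matrix.mul_smul, Matrix.smul_mul, Matrix.neg_mul, Matrix.mul_neg,
          Matrix.mul_one, Matrix.one_mul, Matrix.zero_mul, Matrix.mul_zero,
          neg_neg, zero_add, add_zero, smul_smul]
        match_scalars
        field_simp
      · simp only [Matrix.mul_smul, Matrix.smul_mul, Matrix.neg_mul, Matrix.mul_neg,
          Matrix.mul_one, Matrix.one_mul, Matrix.zero_mul, Matrix.mul_zero,
          neg_neg, zero_add, add_zero, smul_smul]
        match_scalars
        field_simp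
      · simp only [Matrix.mul_smul, Matrix.smul_mul, Matrix.neg_mul, Matrix.mul_neg,
          Matrix.mul_one, Matrix.one_mul, Matrix.zero_mul, Matrix.mul_zero,
          neg_neg, zero_add, add_zero, smul_smul]
        match_scalars
        field_simp
    rw [keyId]
    exact (psd_smul_aux (inv_nonneg.mpr halpos.le)
      (Matrix.posSemidef_conjTranspose_mul_self K)).add
      (psd_blockdiag_aux hD Matrix.PosSemidef.zero)
  -- part (ii)
  · set C : Matrix (Fin n) (Fin n) ℝ :=
      (lamhat * alphat) • (1 : Matrix (Fin n) (Fin n) ℝ) - a • What with hCdef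
    have hCpsd : C.PosSemidef := by
      have h : C = a • (β₂ • (1 : Matrix (Fin n) (Fin n) ℝ) - What) := by
        rw [hCdef, ← k2]; module
      rw [h]
      exact psd_smul_aux hapos.le hupp
    set P₂ : Matrix (Fin n ⊕ Fin n) (Fin n ⊕ Fin n) ℝ :=
      Matrix.fromBlocks (lamhat • (1 : Matrix (Fin n) (Fin n) ℝ)) 1 0 0 with hP₂
    set Q₂ : Matrix (Fin n ⊕ Fin n) (Fin n ⊕ Fin n) ℝ :=
      Matrix.fromBlocks 0 1 0 0 with hQ₂
    have hNid : Matrix.fromBlocks (lamhat • (a • What)) (a • What) (a • What)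
        (alphat • (1 : Matrix (Fin n) (Fin n) ℝ))
        = lamhat⁻¹ • (P₂ᴴ * Matrix.fromBlocks (a • What) 0 0 0 * P₂ +
            Q₂ᴴ * Matrix.fromBlocks C 0 0 0 * Q₂) := by
      rw [hP₂, hQ₂, hCdef]
      rw [Matrix.fromBlocks_conjTranspose, Matrix.fromBlocks_conjTranspose,
        Matrix.fromBlocks_multiply, Matrix.fromBlocks_multiply,
        Matrix.fromBlocks_multiply, Matrix.fromBlocks_multiply,
        Matrix.fromBlocks_add, Matrix.fromBlocks_smul]
      have hsym : (a • What)ᴴ = a • What := by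
        rw [Matrix.conjTranspose_eq_transpose_of_trivial, transpose_smul, hWhat.eq]
      refine Matrix.fromBlocks_inj.mpr ⟨?_, ?_, ?_, ?_⟩ <;>
        simp only [Matrix.conjTranspose_smul, Matrix.conjTranspose_one,
          Matrix.conjTranspose_zero, hsym, star_trivial,
          Matrix.mul_smul, Matrix.smul_mul, Matrix.mul_one, Matrix.one_mul,
          Matrix.zero_mul, Matrix.mul_zero, zero_add, add_zero, smul_smul] <;>
        match_scalars <;> field_simp <;> ring
    have hNpsd : (Matrix.fromBlocks (lamhat • (a • What)) (a • What) (a • What)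
        (alphat • (1 : Matrix (Fin n) (Fin n) ℝ))).PosSemidef := by
      rw [hNid]
      refine psd_smul_aux (inv_nonneg.mpr hlam.le) ?_
      exact ((psd_blockdiag_aux hWpsd Matrix.PosSemidef.zero).conjTranspose_mul_mul_same P₂).add
        ((psd_blockdiag_aux hCpsd Matrix.PosSemidef.zero).conjTranspose_mul_mul_same Q₂)
    -- reindex
    set e : Fin n ⊕ (Fin p ⊕ Fin n) → (Fin n ⊕ Fin n) ⊕ Fin p :=
      Sum.elim (fun i => Sum.inl (Sum.inl i))
        (Sum.elim (fun j => Sum.inr j) (fun kk => Sum.inl (Sum.inr kk))) with he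
    have hblk : blk3 (lamhat • (a • What)) 0 (a • What)
          0 ((0 : ℝ) • (1 : Matrix (Fin p) (Fin p) ℝ)) 0
          (a • What) 0 (alphat • (1 : Matrix (Fin n) (Fin n) ℝ))
        = (Matrix.fromBlocks (Matrix.fromBlocks (lamhat • (a • What)) (a • What) (a • What)
            (alphat • (1 : Matrix (Fin n) (Fin n) ℝ))) 0 0
            (0 : Matrix (Fin p) (Fin p) ℝ)).submatrix e e := by
      ext i j
      rcases i with i | i | i <;> rcases j with j | j | j <;>
        simp [blk3, he, Matrix.submatrix_apply]
    rw [hblk]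
    exact (psd_blockdiag_aux hNpsd Matrix.PosSemidef.zero).submatrix e
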